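/- arXiv:1404.6239 — 3 statements merged into one kernel-verified Lean document; each statement's English description precedes it below -/
import Mathlib

section
/- Let n be an odd positive integer. Define a permutation a of Z/nZ by a(0) = 0 and, for odd i with 1 ≤ i ≤ n−2, a swaps i and i+1; and let b be the n-cycle b(i) = i+1 mod n. Then the commutator c = a⁻¹ b⁻¹ a b, as a permutation of Z/nZ, has order n; equivalently, the smallest positive integer k with cᵏ(0) = 0 is k = n. -/
private theorem stmt3_main (n : ℕ) (hn : 3 ≤ n) (hodd : Odd n)
    (a b : Equiv.Perm (ZMod n))
    (ha0 : a 0 = 0)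
    (ha : ∀ x : ZMod n, x ≠ 0 → a x = if Odd x.val then x + 1 else x - 1)
    (hb : ∀ x : ZMod n, b x = x + 1) :
    IsLeast {k : ℕ | 0 < k ∧ ((a⁻¹ * b⁻¹ * a * b) ^ k) 0 = 0} n ∧
      orderOf (a⁻¹ * b⁻¹ * a * b) = n := by
  haveI : NeZero n := ⟨by omega⟩
  haveI : Fact (1 < n) := ⟨by omega⟩
  obtain ⟨m, hm⟩ := hodd
  have hm' : n = 2 * m + 1 := by omega
  -- basic cast facts
  have hvcast : ∀ v : ℕ, v < n → ((v : ZMod n)).val = v := fun v hv => ZMod.val_cast_of_lt hv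
  have hne0 : ∀ x : ZMod n, x.val ≠ 0 → x ≠ 0 := by
    intro x h hx; exact h (by simp [hx])
  have hself : ∀ x : ZMod n, ((x.val : ℕ) : ZMod n) = x := fun x => ZMod.natCast_rightInverse x
  -- a on odd/even values
  have haOdd : ∀ x : ZMod n, x.val % 2 = 1 → a x = x + 1 := by
    intro x hx
    rw [ha x (hne0 x (by omega)), if_pos (Nat.odd_iff.2 hx)]
  have haEven : ∀ x : ZMod n, x.val % 2 = 0 → x.val ≠ 0 → a x = x - 1 := by
    intro x hx h0
    rw [ha x (hne0 x h0), if_neg (by simp [Nat.odd_iff, hx])]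
  -- inverses
  have hbinv : ∀ x : ZMod n, b⁻¹ x = x - 1 := by
    intro x
    have : b (x - 1) = x := by rw [hb]; ring
    calc b⁻¹ x = b⁻¹ (b (x - 1)) := by rw [this]
    _ = x - 1 := b.symm_apply_apply _
  have hainv : a⁻¹ = a := by
    have haa : ∀ x : ZMod n, a (a x) = x := by
      intro x
      by_cases hx0 : x = 0
      · rw [hx0, ha0, ha0]
      · have hxv : x.val ≠ 0 := fun h => hx0 (by rw [← hself x, h]; simp)
        have hxlt : x.val < n := ZMod.val_lt x
        rcases Nat.even_or_odd x.val with he | ho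
        · have he' : x.val % 2 = 0 := Nat.even_iff.1 he
          rw [haEven x he' hxv]
          have h1 : (x - 1) = ((x.val - 1 : ℕ) : ZMod n) := by
            push_cast [Nat.cast_sub (by omega : 1 ≤ x.val)]
            rw [hself]
          have hv1 : (x - 1).val = x.val - 1 := by rw [h1, hvcast _ (by omega)]
          rw [haOdd _ (by rw [hv1]; omega)]
          ring
        · have ho' : x.val % 2 = 1 := Nat.odd_iff.1 ho
          rw [haOdd x ho']
          -- x.val ≠ n - 1 since n - 1 is even
          have hxle : x.val + 1 < n := by omega
          have hv1 : (x + 1).val = x.val + 1 := by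
            rw [ZMod.val_add_of_lt (by rw [ZMod.val_one]; omega)]
            rw [ZMod.val_one]
          rw [haEven _ (by rw [hv1]; omega) (by rw [hv1]; omega)]
          ring
    have : a * a = 1 := Equiv.ext fun x => haa x
    exact inv_eq_of_mul_eq_one_left this
  set c : Equiv.Perm (ZMod n) := a⁻¹ * b⁻¹ * a * b with hc
  have hcapp : ∀ x : ZMod n, c x = a (a (x + 1) - 1) := by
    intro x
    simp only [hc, Equiv.Perm.mul_apply, hb, hbinv, hainv]
  -- values of c
  have hcEven : ∀ x : ZMod n, x.val % 2 = 0 → x.val + 2 < n → c x = x + 2 := by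
    intro x hx h2
    have hv1 : (x + 1).val = x.val + 1 := by
      rw [ZMod.val_add_of_lt (by rw [ZMod.val_one]; omega), ZMod.val_one]
    have hin : a (x + 1) = x + 1 + 1 := haOdd (x + 1) (by rw [hv1]; omega)
    rw [hcapp, hin, show x + 1 + 1 - 1 = x + 1 by ring, hin]
    ring
  have hneg1 : ((n - 1 : ℕ) : ZMod n) = -1 := by
    push_cast [Nat.cast_sub (by omega : 1 ≤ n)]
    simp
  have hvneg1 : (-1 : ZMod n).val = n - 1 := by
    rw [← hneg1, hvcast _ (by omega)]
  have hcNeg : c (-1 : ZMod n) = -2 := by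
    rw [hcapp]
    have h1 : (-1 : ZMod n) + 1 = 0 := by ring
    rw [h1, ha0]
    have h2 : (0 : ZMod n) - 1 = -1 := by ring
    rw [h2, haEven _ (by rw [hvneg1]; omega) (by rw [hvneg1]; omega)]
    ring
  have hcOdd : ∀ x : ZMod n, x.val % 2 = 1 → 3 ≤ x.val → c x = x - 2 := by
    intro x hx h3
    have hxlt : x.val < n := ZMod.val_lt x
    have hxle : x.val + 1 < n := by omega
    have hv1 : (x + 1).val = x.val + 1 := by
      rw [ZMod.val_add_of_lt (by rw [ZMod.val_one]; omega), ZMod.val_one]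
    have hin : a (x + 1) = x + 1 - 1 :=
      haEven (x + 1) (by rw [hv1]; omega) (by rw [hv1]; omega)
    rw [hcapp, hin, show x + 1 - 1 - 1 = x - 1 by ring]
    have h5 : (x - 1) = ((x.val - 1 : ℕ) : ZMod n) := by
      push_cast [Nat.cast_sub (by omega : 1 ≤ x.val)]
      rw [hself]
    have hv2 : (x - 1).val = x.val - 1 := by rw [h5, hvcast _ (by omega)]
    rw [haEven (x - 1) (by rw [hv2]; omega) (by rw [hv2]; omega)]
    ring
  have h2val : ((1 : ZMod n) + 1).val = 2 := by
    rw [ZMod.val_add_of_lt (by rw [ZMod.val_one]; omega), ZMod.val_one]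
  have hc1 : c (1 : ZMod n) = 0 := by
    have hin : a ((1 : ZMod n) + 1) = 1 + 1 - 1 :=
      haEven _ (by rw [h2val]) (by rw [h2val]; omega)
    rw [hcapp, hin, show (1 : ZMod n) + 1 - 1 - 1 = 0 by ring, ha0]
  -- the orbit function
  set g : ℕ → ZMod n := fun k =>
    if k ≤ m then ((2 * k : ℕ) : ZMod n) else ((2 * n - 1 - 2 * k : ℕ) : ZMod n) with hg
  have hgle : ∀ k, k ≤ m → g k = ((2 * k : ℕ) : ZMod n) := by
    intro k hk; simp only [hg, if_pos hk]
  have hggt : ∀ k, m < k → g k = ((2 * n - 1 - 2 * k : ℕ) : ZMod n) := by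
    intro k hk; simp only [hg, if_neg (Nat.not_le.2 hk)]
  have hstep : ∀ k, k < n → c (g k) = g (k + 1) := by
    intro k hk
    rcases lt_trichotomy k m with hkm | hkm | hkm
    · -- k < m : even branch, add 2
      rw [hgle k (by omega), hgle (k+1) (by omega)]
      have hv : ((2 * k : ℕ) : ZMod n).val = 2 * k := hvcast _ (by omega)
      rw [hcEven _ (by rw [hv]; omega) (by rw [hv]; omega)]
      push_cast; ring
    · -- k = m : from -1 to -2
      subst hkm
      rw [hgle k le_rfl, hggt (k+1) (by omega)]
      have h1 : ((2 * k : ℕ) : ZMod n) = -1 := by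
        rw [show 2 * k = n - 1 by omega]; exact hneg1
      have h2 : (2 * n - 1 - 2 * (k + 1) : ℕ) = n - 2 := by omega
      rw [h1, hcNeg, h2]
      push_cast [Nat.cast_sub (by omega : 2 ≤ n)]
      simp
    · rcases eq_or_lt_of_le (by omega : k + 1 ≤ n) with hk1 | hk1
      · -- k = n - 1 : from 1 to 0
        rw [hggt k hkm, hggt (k+1) (by omega)]
        have h1 : (2 * n - 1 - 2 * k : ℕ) = 1 := by omega
        have h2 : (2 * n - 1 - 2 * (k + 1) : ℕ) = 0 := by omega
        rw [h1, h2]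
        simpa using hc1
      · -- m < k < n - 1 : odd branch, subtract 2
        rw [hggt k hkm, hggt (k+1) (by omega)]
        have hb1 : 3 ≤ 2 * n - 1 - 2 * k := by omega
        have hb2 : 2 * n - 1 - 2 * k < n := by omega
        have hv : ((2 * n - 1 - 2 * k : ℕ) : ZMod n).val = 2 * n - 1 - 2 * k :=
          hvcast _ hb2
        rw [hcOdd _ (by rw [hv]; omega) (by rw [hv]; omega)]
        rw [show (2 * n - 1 - 2 * (k + 1) : ℕ) = (2 * n - 1 - 2 * k) - 2 by omega]
        push_cast [Nat.cast_sub (by omega : 2 ≤ 2 * n - 1 - 2 * k)]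
        ring
  have hg0 : g 0 = 0 := by rw [hgle 0 (by omega)]; simp
  have hgn : g n = 0 := by
    rw [hggt n (by omega), show (2 * n - 1 - 2 * n : ℕ) = 0 by omega]; simp
  have horbit : ∀ k, k ≤ n → (c ^ k) 0 = g k := by
    intro k
    induction k with
    | zero => intro _; simpa using hg0.symm
    | succ k ih =>
      intro hk
      rw [pow_succ', Equiv.Perm.mul_apply, ih (by omega), hstep k (by omega)]
  have hcn0 : (c ^ n) 0 = 0 := by rw [horbit n le_rfl, hgn]
  have hgne : ∀ k, 0 < k → k < n → g k ≠ 0 := by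
    intro k hk0 hkn
    rcases le_or_gt k m with hkm | hkm
    · rw [hgle k hkm]
      exact hne0 _ (by rw [hvcast _ (by omega)]; omega)
    · rw [hggt k hkm]
      exact hne0 _ (by rw [hvcast _ (by omega)]; omega)
  have hsurj : ∀ x : ZMod n, ∃ k, k ≤ n ∧ (c ^ k) 0 = x := by
    intro x
    have hxlt : x.val < n := ZMod.val_lt x
    rcases Nat.even_or_odd x.val with he | ho
    · have he' : x.val % 2 = 0 := Nat.even_iff.1 he
      refine ⟨x.val / 2, by omega, ?_⟩
      rw [horbit _ (by omega), hgle _ (by omega), show 2 * (x.val / 2) = x.val by omega,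
        hself]
    · have ho' : x.val % 2 = 1 := Nat.odd_iff.1 ho
      have hxle : x.val ≤ n - 2 := by omega
      refine ⟨(2 * n - 1 - x.val) / 2, by omega, ?_⟩
      rw [horbit _ (by omega), hggt _ (by omega),
        show 2 * n - 1 - 2 * ((2 * n - 1 - x.val) / 2) = x.val by omega, hself]
  have hcn : c ^ n = 1 := by
    apply Equiv.ext
    intro x
    obtain ⟨k, hk, hkx⟩ := hsurj x
    calc (c ^ n) x = (c ^ n) ((c ^ k) 0) := by rw [hkx]
    _ = (c ^ k) ((c ^ n) 0) := by
        rw [← Equiv.Perm.mul_apply, ← Equiv.Perm.mul_apply, ← pow_add, ← pow_add,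
          add_comm]
    _ = x := by rw [hcn0, hkx]
  have hlb : ∀ k ∈ {k : ℕ | 0 < k ∧ (c ^ k) 0 = 0}, n ≤ k := by
    intro k hk
    obtain ⟨hk0, hk1⟩ := hk
    by_contra hlt
    push_neg at hlt
    exact hgne k hk0 hlt (by rw [← horbit k (by omega)]; exact hk1)
  have hmem : n ∈ {k : ℕ | 0 < k ∧ (c ^ k) 0 = 0} := ⟨by omega, hcn0⟩
  refine ⟨⟨hmem, hlb⟩, ?_⟩
  have hdvd : orderOf c ∣ n := orderOf_dvd_of_pow_eq_one hcn
  have hpos' : 0 < orderOf c := by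
    rcases Nat.eq_zero_or_pos (orderOf c) with h0 | h0
    · rw [h0] at hdvd; omega
    · exact h0
  have h1 : n ≤ orderOf c := hlb _ ⟨hpos', by rw [pow_orderOf_eq_one]; rfl⟩
  have h2 : orderOf c ≤ n := Nat.le_of_dvd (by omega) hdvd
  omega

/-- Let `n` be odd, `a` the permutation of `ℤ/nℤ` fixing `0` and swapping `i ↔ i+1`
for odd `1 ≤ i ≤ n−2`, and `b : i ↦ i+1`. Then the commutator `c = a⁻¹b⁻¹ab` has
order `n`; equivalently the least positive `k` with `cᵏ(0) = 0` is `n`. -/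
theorem stmt_3 (n : ℕ) (hpos : 0 < n) (hodd : Odd n)
    (a b : Equiv.Perm (ZMod n))
    (ha0 : a 0 = 0)
    (ha : ∀ x : ZMod n, x ≠ 0 → a x = if Odd x.val then x + 1 else x - 1)
    (hb : ∀ x : ZMod n, b x = x + 1) :
    IsLeast {k : ℕ | 0 < k ∧ ((a⁻¹ * b⁻¹ * a * b) ^ k) 0 = 0} n ∧
      orderOf (a⁻¹ * b⁻¹ * a * b) = n := by
  rcases eq_or_lt_of_le (Nat.one_le_iff_ne_zero.2 (by omega) : 1 ≤ n) with h1 | h1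
  · -- n = 1 : everything is trivial
    subst h1
    have hc1 : a⁻¹ * b⁻¹ * a * b = 1 := Equiv.ext fun x => Subsingleton.elim _ _
    rw [hc1]
    refine ⟨⟨⟨Nat.one_pos, ?_⟩, fun k hk => hk.1⟩, orderOf_one⟩
    exact Subsingleton.elim _ _
  · have h3 : 3 ≤ n := by
      obtain ⟨m, hm⟩ := hodd; omega
    exact stmt3_main n h3 hodd a b ha0 ha hb
end

section
/- Suppose X and Y are geodesic metric spaces, X = ⋃_{i∈I} V_i and Y = ⋃_{i∈I} W_i are decompositions into closed subsets, Φ : X → Y is a bijection with Φ(V_i) = W_i, the restriction of Φ to each V_i is K-bilipschitz onto W_i, and every pair of points in X (resp. Y) is joined by a geodesic that decomposes into finitely many subsegments each contained in some V_i (resp. W_i). Then Φ is a K-bilipschitz equivalence from X to Y. -/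
/-- Tilings lemma (Lemma 4.8): if `X = ⋃ Vᵢ`, `Y = ⋃ Wᵢ` are covers by closed sets,
`Φ : X ≃ Y` maps `Vᵢ` onto `Wᵢ` and is `K`-bilipschitz on each `Vᵢ`, and all pairs of
points in `X` (resp. `Y`) are joined by geodesics decomposing into finitely many
subsegments each inside some `Vᵢ` (resp. `Wᵢ`), then `Φ` is `K`-bilipschitz on `X`. -/
theorem stmt_5 {X Y : Type*} [MetricSpace X] [MetricSpace Y] {ι : Type*}
    (V : ι → Set X) (W : ι → Set Y) (K : ℝ) (hK : 1 ≤ K)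
    (hVclosed : ∀ i, IsClosed (V i)) (hWclosed : ∀ i, IsClosed (W i))
    (hVcover : ∀ x : X, ∃ i, x ∈ V i) (hWcover : ∀ y : Y, ∃ i, y ∈ W i)
    (Φ : X ≃ Y) (hΦ : ∀ i, Φ '' V i = W i)
    (hbl : ∀ i, ∀ x ∈ V i, ∀ x' ∈ V i,
      (1 / K) * dist x x' ≤ dist (Φ x) (Φ x') ∧ dist (Φ x) (Φ x') ≤ K * dist x x')
    (hchainX : ∀ x x' : X, ∃ (m : ℕ) (p : ℕ → X), p 0 = x ∧ p m = x' ∧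
      (∀ j < m, ∃ i, p j ∈ V i ∧ p (j + 1) ∈ V i) ∧
      (∑ j ∈ Finset.range m, dist (p j) (p (j + 1))) = dist x x')
    (hchainY : ∀ y y' : Y, ∃ (m : ℕ) (q : ℕ → Y), q 0 = y ∧ q m = y' ∧
      (∀ j < m, ∃ i, q j ∈ W i ∧ q (j + 1) ∈ W i) ∧
      (∑ j ∈ Finset.range m, dist (q j) (q (j + 1))) = dist y y') :
    ∀ x x' : X,
      (1 / K) * dist x x' ≤ dist (Φ x) (Φ x') ∧ dist (Φ x) (Φ x') ≤ K * dist x x' := by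
  have hK0 : (0:ℝ) < K := lt_of_lt_of_le one_pos hK
  intro x x'
  constructor
  · -- lower bound: use a chain in Y
    obtain ⟨m, q, h0, hm, hseg, hsum⟩ := hchainY (Φ x) (Φ x')
    have key : ∀ j < m, dist (Φ.symm (q j)) (Φ.symm (q (j+1))) ≤ K * dist (q j) (q (j+1)) := by
      intro j hj
      obtain ⟨i, h1, h2⟩ := hseg j hj
      have hv1 : Φ.symm (q j) ∈ V i := by
        rw [← hΦ i] at h1; obtain ⟨a, ha, hae⟩ := h1; simpa [← hae] using ha
      have hv2 : Φ.symm (q (j+1)) ∈ V i := by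
        rw [← hΦ i] at h2; obtain ⟨a, ha, hae⟩ := h2; simpa [← hae] using ha
      have h := (hbl i _ hv1 _ hv2).1
      rw [Φ.apply_symm_apply, Φ.apply_symm_apply] at h
      have := mul_le_mul_of_nonneg_left h (le_of_lt hK0)
      calc dist (Φ.symm (q j)) (Φ.symm (q (j+1)))
          = K * ((1/K) * dist (Φ.symm (q j)) (Φ.symm (q (j+1)))) := by
            field_simp
        _ ≤ K * dist (q j) (q (j+1)) := this
    have tri := dist_le_range_sum_dist (fun j => Φ.symm (q j)) m
    simp only [h0, hm, Φ.symm_apply_apply] at tri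
    have : dist x x' ≤ K * dist (Φ x) (Φ x') := by
      calc dist x x' ≤ ∑ j ∈ Finset.range m, dist (Φ.symm (q j)) (Φ.symm (q (j+1))) := tri
        _ ≤ ∑ j ∈ Finset.range m, K * dist (q j) (q (j+1)) := by
            apply Finset.sum_le_sum
            intro j hj
            exact key j (Finset.mem_range.mp hj)
        _ = K * ∑ j ∈ Finset.range m, dist (q j) (q (j+1)) := by rw [Finset.mul_sum]
        _ = K * dist (Φ x) (Φ x') := by rw [hsum]
    rw [one_div, inv_mul_le_iff₀ hK0]
    exact this
  · -- upper bound: use a chain in X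
    obtain ⟨m, p, h0, hm, hseg, hsum⟩ := hchainX x x'
    have tri := dist_le_range_sum_dist (fun j => Φ (p j)) m
    simp only [h0, hm] at tri
    calc dist (Φ x) (Φ x') ≤ ∑ j ∈ Finset.range m, dist (Φ (p j)) (Φ (p (j+1))) := tri
      _ ≤ ∑ j ∈ Finset.range m, K * dist (p j) (p (j+1)) := by
          apply Finset.sum_le_sum
          intro j hj
          obtain ⟨i, h1, h2⟩ := hseg j (Finset.mem_range.mp hj)
          exact (hbl i _ h1 _ h2).2
      _ = K * ∑ j ∈ Finset.range m, dist (p j) (p (j+1)) := by rw [Finset.mul_sum]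
      _ = K * dist x x' := by rw [hsum]
end

section
/- Let S₁ ≤ S₂ ≤ S₃ ≤ S₄ and T₁ ≤ T₂ ≤ T₃ ≤ T₄ be negative rational numbers with S₁+S₂+S₃+S₄ = T₁+T₂+T₃+T₄, (S₁+S₂)/(S₃+S₄) = (T₁+T₂)/(T₃+T₄), S₁/S₂ = T₁/T₂, and S₃/S₄ = T₃/T₄. Then S_i = T_i for all i. -/
lemma aux_ratio (a b c d : ℚ) (hb : b ≠ 0) (hd : d ≠ 0) (hs : a + b ≠ 0)
    (hr : a / b = c / d) (hsum : a + b = c + d) : a = c ∧ b = d := by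
  have h1 : a * d = c * b := by
    field_simp at hr; linarith [hr]
  have h2 : (a + b) * d = (a + b) * b := by
    linear_combination h1 - b * hsum
  have hbd : d = b := by
    have := mul_left_cancel₀ hs h2
    exact this
  subst hbd
  constructor
  · exact mul_right_cancel₀ hb h1
  · rfl

/-- Arithmetic core of the converse of Theorem 3.8: sorted negative rationals with
equal total sum, equal ratio of partial sums, and matching topological-type ratios
must coincide. -/
theorem stmt_9 (S₁ S₂ S₃ S₄ T₁ T₂ T₃ T₄ : ℚ)
    (hS12 : S₁ ≤ S₂) (hS23 : S₂ ≤ S₃) (hS34 : S₃ ≤ S₄) (hS : S₄ < 0)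
    (hT12 : T₁ ≤ T₂) (hT23 : T₂ ≤ T₃) (hT34 : T₃ ≤ T₄) (hT : T₄ < 0)
    (hsum : S₁ + S₂ + S₃ + S₄ = T₁ + T₂ + T₃ + T₄)
    (hratio : (S₁ + S₂) / (S₃ + S₄) = (T₁ + T₂) / (T₃ + T₄))
    (h12 : S₁ / S₂ = T₁ / T₂)
    (h34 : S₃ / S₄ = T₃ / T₄) :
    S₁ = T₁ ∧ S₂ = T₂ ∧ S₃ = T₃ ∧ S₄ = T₄ := by
  have hS3 : S₃ < 0 := lt_of_le_of_lt hS34 hS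
  have hS2 : S₂ < 0 := lt_of_le_of_lt hS23 hS3
  have hS1 : S₁ < 0 := lt_of_le_of_lt hS12 hS2
  have hT3 : T₃ < 0 := lt_of_le_of_lt hT34 hT
  have hT2 : T₂ < 0 := lt_of_le_of_lt hT23 hT3
  have hT1 : T₁ < 0 := lt_of_le_of_lt hT12 hT2
  have hAB := aux_ratio (S₁ + S₂) (S₃ + S₄) (T₁ + T₂) (T₃ + T₄)
    (by linarith) (by linarith) (by linarith)
    hratio (by linarith)
  obtain ⟨hA, hB⟩ := hAB
  have h1 := aux_ratio S₁ S₂ T₁ T₂ (by linarith) (by linarith) (by linarith) h12 hA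
  have h2 := aux_ratio S₃ S₄ T₃ T₄ (by linarith) (by linarith) (by linarith) h34 hB
  exact ⟨h1.1, h1.2, h2.1, h2.2⟩
end
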